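/- arXiv:2003.03953 — 2 statements merged into one kernel-verified Lean document; each statement's English description precedes it below -/
import Mathlib

section
/- Let R be a commutative Noetherian ring, A a nonzero Artinian R-module, and B a proper submodule of A. Then ir'_R(A/B) ≤ ir'_R(A). In particular, if A is sum-irreducible, then so is A/B. -/
/-- A submodule `B` of `A` is sum-irreducible if it is nonzero and cannot be written as the
sum of two strictly smaller submodules. -/
def IsSumIrredSubmodule (R A : Type*) [CommRing R] [AddCommGroup A] [Module R A]
    (B : Submodule R A) : Prop :=
  B ≠ ⊥ ∧ ∀ C D : Submodule R A, C ⊔ D = B → C = B ∨ D = B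

open Classical in
/-- The sum-reducibility index `ir'_R(A)`: the number of components in an irredundant
representation of `A` as a sum of sum-irreducible submodules. -/
noncomputable def coirIndex (R A : Type*) [CommRing R] [AddCommGroup A] [Module R A] : ℕ :=
  sInf {n | ∃ T : Finset (Submodule R A), T.card = n ∧ (∀ B ∈ T, IsSumIrredSubmodule R A B) ∧
    T.sup id = ⊤ ∧ ∀ B ∈ T, (T.erase B).sup id ≠ ⊤}

/-- The image of a sum-irreducible submodule under a linear map is sum-irreducible
provided it is nonzero. -/
theorem isSumIrred_map {R A A' : Type*} [CommRing R] [AddCommGroup A] [Module R A]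
    [AddCommGroup A'] [Module R A'] (f : A →ₗ[R] A') {C : Submodule R A}
    (h : IsSumIrredSubmodule R A C) (h0 : C.map f ≠ ⊥) :
    IsSumIrredSubmodule R A' (C.map f) := by
  refine ⟨h0, fun X Y hXY => ?_⟩
  have key : (C ⊓ Submodule.comap f X) ⊔ (C ⊓ Submodule.comap f Y) = C := by
    refine le_antisymm (sup_le inf_le_left inf_le_left) (fun c hc => ?_)
    have : f c ∈ X ⊔ Y := hXY ▸ Submodule.mem_map_of_mem hc
    rw [Submodule.mem_sup] at this
    obtain ⟨x, hx, y, hy, hxy⟩ := this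
    have hxC : x ∈ C.map f := hXY ▸ Submodule.mem_sup_left hx
    obtain ⟨c₁, hc₁, rfl⟩ := hxC
    refine Submodule.mem_sup.2 ⟨c₁, ⟨hc₁, hx⟩, c - c₁, ⟨sub_mem hc hc₁, ?_⟩, by abel⟩
    show f (c - c₁) ∈ Y
    rw [map_sub]
    have : f c - f c₁ = y := by rw [← hxy]; abel
    rwa [this]
  rcases h.2 _ _ key with hC | hC
  · left
    refine le_antisymm (le_sup_left.trans hXY.le) ?_
    · rw [← hC]
      rintro _ ⟨c, hc, rfl⟩
      exact hc.2
  · right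
    refine le_antisymm (le_sup_right.trans hXY.le) ?_
    · rw [← hC]
      rintro _ ⟨c, hc, rfl⟩
      exact hc.2

/-- In an Artinian module, every nonzero submodule is a finite sum of sum-irreducible
submodules. -/
theorem exists_sumIrred_decomp {R A : Type*} [CommRing R] [AddCommGroup A] [Module R A]
    [IsArtinian R A] (N : Submodule R A) (hN : N ≠ ⊥) :
    ∃ T : Finset (Submodule R A), (∀ B ∈ T, IsSumIrredSubmodule R A B) ∧ T.sup id = N := by
  induction N using WellFoundedLT.induction with
  | ind N ih =>
  by_cases hirr : IsSumIrredSubmodule R A N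
  · exact ⟨{N}, by simpa using hirr, by simp⟩
  · rw [IsSumIrredSubmodule, not_and_or] at hirr
    rcases hirr with h | h
    · exact absurd (not_not.1 h) hN
    · push_neg at h
      obtain ⟨C, D, hCD, hC, hD⟩ := h
      have hCle : C < N := lt_of_le_of_ne (hCD ▸ le_sup_left) hC
      have hDle : D < N := lt_of_le_of_ne (hCD ▸ le_sup_right) hD
      have hC0 : C ≠ ⊥ := by
        rintro rfl
        exact hD (by simpa using hCD)
      have hD0 : D ≠ ⊥ := by
        rintro rfl
        exact hC (by simpa using hCD)
      obtain ⟨T₁, hT₁, hsT₁⟩ := ih C hCle hC0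
      obtain ⟨T₂, hT₂, hsT₂⟩ := ih D hDle hD0
      classical
      refine ⟨T₁ ∪ T₂, fun B hB => ?_, ?_⟩
      · rcases Finset.mem_union.1 hB with hB | hB
        · exact hT₁ B hB
        · exact hT₂ B hB
      · rw [Finset.sup_union, hsT₁, hsT₂, hCD]

open Classical in
/-- Any finite sum-decomposition into sum-irreducibles can be refined to an irredundant one. -/
theorem exists_irredundant_subset {R A : Type*} [CommRing R] [AddCommGroup A] [Module R A]
    (T : Finset (Submodule R A)) (hT : T.sup id = ⊤) :
    ∃ S : Finset (Submodule R A), S ⊆ T ∧ S.sup id = ⊤ ∧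
      ∀ B ∈ S, (S.erase B).sup id ≠ ⊤ := by
  induction T using Finset.strongInduction with
  | _ T ih =>
  by_cases h : ∃ B ∈ T, (T.erase B).sup id = ⊤
  · obtain ⟨B, hB, hBs⟩ := h
    obtain ⟨S, hS1, hS2, hS3⟩ := ih (T.erase B) (Finset.erase_ssubset hB) hBs
    exact ⟨S, hS1.trans (Finset.erase_subset _ _), hS2, hS3⟩
  · push_neg at h
    exact ⟨T, Finset.Subset.refl _, hT, h⟩

open Classical in
/-- If `⊤` is a finite sum of sum-irreducible submodules indexed by `T`, then
`coirIndex ≤ T.card`. -/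
theorem coirIndex_le_card {R A : Type*} [CommRing R] [AddCommGroup A] [Module R A]
    (T : Finset (Submodule R A)) (hirr : ∀ B ∈ T, IsSumIrredSubmodule R A B)
    (hT : T.sup id = ⊤) : coirIndex R A ≤ T.card := by
  obtain ⟨S, hS1, hS2, hS3⟩ := exists_irredundant_subset T hT
  exact le_trans (Nat.sInf_le ⟨S, rfl, fun B hB => hirr B (hS1 hB), hS2, hS3⟩)
    (Finset.card_le_card hS1)

open Classical in
theorem map_finset_sup_aux {R A A' : Type*} [CommRing R] [AddCommGroup A] [Module R A]
    [AddCommGroup A'] [Module R A'] (f : A →ₗ[R] A') (T : Finset (Submodule R A)) :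
    Submodule.map f (T.sup id) = (T.image (Submodule.map f)).sup id := by
  induction T using Finset.induction with
  | empty => simp
  | insert a s h ih => simp [Finset.sup_insert, Submodule.map_sup, ih]

open Classical in
/-- For a Noetherian ring `R`, a nonzero Artinian `R`-module `A` and a proper submodule
`B ⊊ A`, one has `ir'_R(A/B) ≤ ir'_R(A)`; in particular, if `A` is sum-irreducible then
so is `A/B`. -/
theorem coirIndex_quotient_le (R A : Type*) [CommRing R] [IsNoetherianRing R]
    [AddCommGroup A] [Module R A] [IsArtinian R A] [Nontrivial A]
    (B : Submodule R A) (hB : B ≠ ⊤) :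
    coirIndex R (A ⧸ B) ≤ coirIndex R A ∧
      (IsSumIrredSubmodule R A ⊤ → IsSumIrredSubmodule R (A ⧸ B) ⊤) := by
  have hQ : Nontrivial (A ⧸ B) := Submodule.Quotient.nontrivial_iff.2 hB
  have hQ' : Nontrivial (Submodule R (A ⧸ B)) := (Submodule.nontrivial_iff R).2 hQ
  have hA' : Nontrivial (Submodule R A) := (Submodule.nontrivial_iff R).2 ‹_›
  have hmap_top : (⊤ : Submodule R A).map B.mkQ = ⊤ := by
    rw [Submodule.map_top, Submodule.range_mkQ]
  have htop_ne : (⊤ : Submodule R (A ⧸ B)) ≠ ⊥ := top_ne_bot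
  constructor
  · -- index inequality
    have hset : {n | ∃ T : Finset (Submodule R A), T.card = n ∧
        (∀ C ∈ T, IsSumIrredSubmodule R A C) ∧ T.sup id = ⊤ ∧
        ∀ C ∈ T, (T.erase C).sup id ≠ ⊤}.Nonempty := by
      obtain ⟨T, hirr, hsup⟩ := exists_sumIrred_decomp (⊤ : Submodule R A) top_ne_bot
      obtain ⟨S, hS1, hS2, hS3⟩ := exists_irredundant_subset T hsup
      exact ⟨S.card, S, rfl, fun C hC => hirr C (hS1 hC), hS2, hS3⟩
    have hmem := Nat.sInf_mem hset
    obtain ⟨T, hcard, hirr, hsup, -⟩ := hmem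
    -- push to the quotient
    set U : Finset (Submodule R (A ⧸ B)) := (T.image (Submodule.map B.mkQ)).erase ⊥ with hU
    have hUsup : U.sup id = ⊤ := by
      rw [hU, Finset.sup_erase_bot, ← map_finset_sup_aux, hsup, hmap_top]
    have hUirr : ∀ C ∈ U, IsSumIrredSubmodule R (A ⧸ B) C := by
      intro C hC
      rw [hU, Finset.mem_erase, Finset.mem_image] at hC
      obtain ⟨hC0, D, hD, rfl⟩ := hC
      exact isSumIrred_map _ (hirr D hD) hC0
    calc coirIndex R (A ⧸ B) ≤ U.card := coirIndex_le_card U hUirr hUsup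
      _ ≤ (T.image (Submodule.map B.mkQ)).card := Finset.card_le_card (Finset.erase_subset _ _)
      _ ≤ T.card := Finset.card_image_le
      _ = coirIndex R A := hcard
  · intro h
    have := isSumIrred_map B.mkQ h (by rw [hmap_top]; exact htop_ne)
    rwa [hmap_top] at this
end

section
/- Let (R, m) be a commutative Noetherian local ring with residue field k = R/m and let A be a nonzero Artinian R-module of finite length. Then ir'_R(A) = dim_k(A/mA). -/
section Aux

variable {R A : Type*} [CommRing R] [IsLocalRing R] [AddCommGroup A] [Module R A]

local notation "𝔪" => IsLocalRing.maximalIdeal R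

/-- A nonzero cyclic module over a local ring is sum-irreducible. -/
lemma isSumIrred_of_span_singleton (x : A) (hx : Submodule.span R {x} ≠ ⊥) :
    IsSumIrredSubmodule R A (Submodule.span R {x}) := by
  refine ⟨hx, fun C D hCD => ?_⟩
  by_contra hcon
  push_neg at hcon
  obtain ⟨hC, hD⟩ := hcon
  set B := Submodule.span R {x} with hB
  have key : ∀ N : Submodule R A, N ≤ B → N ≠ B → N ≤ 𝔪 • B := by
    intro N hNB hne c hc
    obtain ⟨r, hr⟩ := Submodule.mem_span_singleton.mp (hNB hc)
    by_cases hu : IsUnit r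
    · exfalso
      apply hne
      refine le_antisymm hNB ?_
      rw [hB, Submodule.span_le, Set.singleton_subset_iff]
      obtain ⟨u, rfl⟩ := hu
      have h1 : ((u⁻¹ : Rˣ) : R) • c ∈ N := N.smul_mem _ hc
      rwa [← hr, smul_smul, Units.inv_mul, one_smul] at h1
    · have hrm : r ∈ 𝔪 := hu
      rw [← hr]
      exact Submodule.smul_mem_smul hrm (Submodule.mem_span_singleton_self x)
  have hBle : B ≤ 𝔪 • B := by
    conv_lhs => rw [← hCD]
    exact sup_le (key C (hCD ▸ le_sup_left) hC) (key D (hCD ▸ le_sup_right) hD)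
  exact hx (Submodule.eq_bot_of_le_smul_of_le_jacobson_bot 𝔪 B
    (Submodule.fg_span_singleton x) hBle (IsLocalRing.maximalIdeal_le_jacobson ⊥))

/-- A sum-irreducible finitely generated module is cyclic. -/
lemma exists_span_singleton_of_isSumIrred {B : Submodule R A} (hfg : B.FG)
    (h : IsSumIrredSubmodule R A B) : ∃ x : A, B = Submodule.span R {x} := by
  classical
  obtain ⟨s, hs⟩ := hfg
  suffices H : ∀ s : Finset A, Submodule.span R ↑s = B → ∃ x, B = Submodule.span R {x} from
    H s hs
  intro s
  induction s using Finset.induction_on with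
  | empty =>
    intro hs
    rw [Finset.coe_empty, Submodule.span_empty] at hs
    exact absurd hs.symm h.1
  | insert _ _ ha ih =>
    intro hs
    rw [Finset.coe_insert, Submodule.span_insert] at hs
    rcases h.2 _ _ hs with h1 | h2
    · exact ⟨_, h1.symm⟩
    · exact ih h2

/-- Nakayama: if `N ⊔ 𝔪A = A` then `N = A`. -/
lemma eq_top_of_sup_smul_top [IsNoetherian R A] {N : Submodule R A}
    (h : N ⊔ 𝔪 • (⊤ : Submodule R A) = ⊤) : N = ⊤ :=
  top_le_iff.mp <| Submodule.le_of_le_smul_of_le_jacobson_bot (IsNoetherian.noetherian ⊤)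
    (IsLocalRing.maximalIdeal_le_jacobson ⊥) h.ge

lemma map_mkQ_smul_top_eq_top [IsNoetherian R A] {N : Submodule R A}
    (h : Submodule.map (𝔪 • ⊤ : Submodule R A).mkQ N = ⊤) : N = ⊤ := by
  rw [Submodule.map_mkQ_eq_top] at h
  exact eq_top_of_sup_smul_top (by rwa [sup_comm])

/-- Scalars from `R ⧸ 𝔪` preserve membership in `R`-submodules of `A ⧸ 𝔪A`. -/
lemma quot_smul_mem {M' : Submodule R (A ⧸ (𝔪 • ⊤ : Submodule R A))} (c : R ⧸ 𝔪)
    {q : A ⧸ (𝔪 • ⊤ : Submodule R A)} (hq : q ∈ M') : c • q ∈ M' := by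
  obtain ⟨r, rfl⟩ := Ideal.Quotient.mk_surjective c
  obtain ⟨a, rfl⟩ := Submodule.Quotient.mk_surjective _ q
  rw [Module.Quotient.mk_smul_mk, Submodule.Quotient.mk_smul]
  exact M'.smul_mem r hq

lemma mem_span_quot {s : Set (A ⧸ (𝔪 • ⊤ : Submodule R A))}
    {q : A ⧸ (𝔪 • ⊤ : Submodule R A)} (h : q ∈ Submodule.span R s) :
    q ∈ Submodule.span (R ⧸ 𝔪) s := by
  induction h using Submodule.span_induction with
  | mem z hz => exact Submodule.subset_span hz
  | zero => exact Submodule.zero_mem _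
  | add a b _ _ ha hb => exact Submodule.add_mem _ ha hb
  | smul r a _ ha =>
    have hra : r • a = (Ideal.Quotient.mk 𝔪 r) • a := by
      obtain ⟨b, rfl⟩ := Submodule.Quotient.mk_surjective _ a
      rw [Module.Quotient.mk_smul_mk, Submodule.Quotient.mk_smul]
    rw [hra]
    exact Submodule.smul_mem _ _ ha

/-- Any irredundant representation of `A` as a sum of sum-irreducible submodules has
exactly `dim_k (A/𝔪A)` components. -/
lemma card_eq_finrank_of_irredundant [IsNoetherian R A] [DecidableEq (Submodule R A)]
    {T : Finset (Submodule R A)}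
    (hirr : ∀ B ∈ T, IsSumIrredSubmodule R A B) (hsup : T.sup id = ⊤)
    (hred : ∀ B ∈ T, (T.erase B).sup id ≠ ⊤) :
    T.card = Module.finrank (R ⧸ 𝔪) (A ⧸ (𝔪 • ⊤ : Submodule R A)) := by
  letI := Ideal.Quotient.field 𝔪
  set p : Submodule R A := 𝔪 • ⊤ with hp
  set π := p.mkQ with hπ
  have hx : ∀ B : ↥T, ∃ x : A, (B : Submodule R A) = Submodule.span R {x} := fun B =>
    exists_span_singleton_of_isSumIrred (IsNoetherian.noetherian _) (hirr B B.2)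
  choose x hxs using hx
  set y : ↥T → A ⧸ p := fun B => π (x B) with hy
  -- spanning over R
  have hspanR : ∀ q : A ⧸ p, q ∈ Submodule.span R (Set.range y) := by
    have hle : T.sup id ≤ Submodule.comap π (Submodule.span R (Set.range y)) := by
      refine Finset.sup_le fun B hB => ?_
      rw [id_eq, show B = Submodule.span R {x ⟨B, hB⟩} from hxs ⟨B, hB⟩,
        Submodule.span_le, Set.singleton_subset_iff]
      exact Submodule.subset_span ⟨⟨B, hB⟩, rfl⟩
    intro q
    obtain ⟨a, rfl⟩ := Submodule.Quotient.mk_surjective p q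
    have : a ∈ T.sup id := hsup ▸ Submodule.mem_top
    exact hle this
  -- spanning over R ⧸ 𝔪
  have hspan : ⊤ ≤ Submodule.span (R ⧸ 𝔪) (Set.range y) := fun q _ =>
    mem_span_quot (hspanR q)
  -- linear independence over R ⧸ 𝔪
  have hli : LinearIndependent (R ⧸ 𝔪) y := by
    rw [Fintype.linearIndependent_iff]
    intro g hg i
    by_contra hgi
    set M : Submodule R (A ⧸ p) := Submodule.map π ((T.erase ↑i).sup id) with hM
    have hyM : ∀ j : ↥T, j ≠ i → y j ∈ M := by
      intro j hji
      have hj : (j : Submodule R A) ∈ T.erase ↑i :=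
        Finset.mem_erase.mpr ⟨fun h => hji (Subtype.ext h), j.2⟩
      have hxj : x j ∈ (j : Submodule R A) := by
        rw [hxs j]; exact Submodule.mem_span_singleton_self _
      exact ⟨x j, (Finset.le_sup (f := id) hj : (j : Submodule R A) ≤ _) hxj, rfl⟩
    have hsummem : g i • y i ∈ M := by
      have hsum : g i • y i = -∑ j ∈ Finset.univ.erase i, g j • y j := by
        have := Finset.sum_erase_add Finset.univ (fun j => g j • y j) (Finset.mem_univ i)
        rw [hg] at this
        linear_combination (norm := module) this
      rw [hsum]
      refine M.neg_mem (Submodule.sum_mem _ fun j hj => ?_)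
      exact quot_smul_mem _ (hyM j (Finset.mem_erase.mp hj).1)
    have hyiM : y i ∈ M := by
      have : (g i)⁻¹ • (g i • y i) ∈ M := quot_smul_mem _ hsummem
      rwa [smul_smul, inv_mul_cancel₀ hgi, one_smul] at this
    have hMtop : M = ⊤ := by
      have h1 : Submodule.map π (T.sup id) = ⊤ := by
        rw [hsup, Submodule.map_top, Submodule.range_mkQ]
      have h2 : T.sup id = (↑i : Submodule R A) ⊔ (T.erase ↑i).sup id := by
        conv_lhs => rw [← Finset.insert_erase i.2]
        rw [Finset.sup_insert, id_eq]
      have h3 : Submodule.map π (↑i : Submodule R A) ≤ M := by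
        rw [hxs i, Submodule.map_span, Set.image_singleton, Submodule.span_le,
          Set.singleton_subset_iff]
        exact hyiM
      rw [h2, Submodule.map_sup] at h1
      rw [← h1, sup_eq_right.mpr h3]
    exact hred ↑i i.2 (map_mkQ_smul_top_eq_top hMtop)
  have hbasis : Module.Basis ↥T (R ⧸ 𝔪) (A ⧸ p) := Module.Basis.mk hli hspan
  rw [Module.finrank_eq_card_basis hbasis, Fintype.card_coe]

lemma sup_span_singleton (s : Finset A) :
    s.sup (fun a => Submodule.span R {a}) = Submodule.span R ↑s := by
  classical
  induction s using Finset.induction_on with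
  | empty => simp
  | insert _ _ ha ih => rw [Finset.sup_insert, Finset.coe_insert, Submodule.span_insert, ih]

lemma shrink_to_irredundant [Nontrivial A] [DecidableEq (Submodule R A)] :
    ∀ (n : ℕ) (T : Finset (Submodule R A)), T.card ≤ n →
      (∀ B ∈ T, ∃ a : A, B = Submodule.span R {a}) → T.sup id = ⊤ →
      ∃ T' : Finset (Submodule R A), (∀ B ∈ T', ∃ a : A, B = Submodule.span R {a}) ∧
        T'.sup id = ⊤ ∧ ∀ B ∈ T', (T'.erase B).sup id ≠ ⊤ := by
  intro n
  induction n with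
  | zero =>
    intro T hcard _ hsup
    have hT : T = ∅ := Finset.card_eq_zero.mp (Nat.le_zero.mp hcard)
    subst hT
    rw [Finset.sup_empty] at hsup
    exact absurd hsup bot_ne_top
  | succ n ih =>
    intro T hcard hcyc hsup
    by_cases h : ∃ B ∈ T, (T.erase B).sup id = ⊤
    · obtain ⟨B, hB, hB'⟩ := h
      refine ih (T.erase B) ?_ (fun C hC => hcyc C (Finset.mem_of_mem_erase hC)) hB'
      rw [Finset.card_erase_of_mem hB]
      exact Nat.sub_le_sub_right hcard 1
    · push_neg at h
      exact ⟨T, hcyc, hsup, h⟩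

lemma exists_irredundant [IsNoetherian R A] [Nontrivial A] [DecidableEq (Submodule R A)] :
    ∃ T : Finset (Submodule R A), (∀ B ∈ T, IsSumIrredSubmodule R A B) ∧ T.sup id = ⊤ ∧
      ∀ B ∈ T, (T.erase B).sup id ≠ ⊤ := by
  obtain ⟨s, hs⟩ := IsNoetherian.noetherian (⊤ : Submodule R A)
  set T0 : Finset (Submodule R A) := s.image (fun a => Submodule.span R {a}) with hT0
  have hT0sup : T0.sup id = ⊤ := by
    rw [hT0, Finset.sup_image]
    show s.sup (fun a => Submodule.span R {a}) = ⊤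
    rw [sup_span_singleton, hs]
  have hT0cyc : ∀ B ∈ T0, ∃ a : A, B = Submodule.span R {a} := by
    intro B hB
    rw [hT0, Finset.mem_image] at hB
    obtain ⟨a, _, rfl⟩ := hB
    exact ⟨a, rfl⟩
  obtain ⟨T, hTcyc, hTsup, hTred⟩ :=
    shrink_to_irredundant T0.card T0 le_rfl hT0cyc hT0sup
  refine ⟨T, fun B hB => ?_, hTsup, hTred⟩
  obtain ⟨a, rfl⟩ := hTcyc B hB
  refine isSumIrred_of_span_singleton a fun hbot => ?_
  apply hTred _ hB
  rw [← hTsup]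
  conv_rhs => rw [← Finset.insert_erase hB]
  rw [Finset.sup_insert, id_eq, hbot, bot_sup_eq]

end Aux

/-- For a Noetherian local ring `(R, m)` with residue field `k` and a nonzero Artinian
`R`-module `A` of finite length, `ir'_R(A) = dim_k (A / mA)`. -/
theorem coirIndex_eq_finrank_quotient (R A : Type*) [CommRing R] [IsNoetherianRing R]
    [IsLocalRing R] [AddCommGroup A] [Module R A] [IsArtinian R A] [Nontrivial A]
    (hfl : IsFiniteLength R A) :
    coirIndex R A =
      Module.finrank (R ⧸ IsLocalRing.maximalIdeal R)
        (A ⧸ (IsLocalRing.maximalIdeal R • ⊤ : Submodule R A)) := by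
  classical
  have hNoeth : IsNoetherian R A := (isFiniteLength_iff_isNoetherian_isArtinian.mp hfl).1
  obtain ⟨T, hT1, hT2, hT3⟩ := exists_irredundant (R := R) (A := A)
  set S : Set ℕ := {n | ∃ T : Finset (Submodule R A), T.card = n ∧
    (∀ B ∈ T, IsSumIrredSubmodule R A B) ∧
    T.sup id = ⊤ ∧ ∀ B ∈ T, (T.erase B).sup id ≠ ⊤} with hS
  have hmem : T.card ∈ S := ⟨T, rfl, hT1, hT2, hT3⟩
  have hall : ∀ n ∈ S, n = Module.finrank (R ⧸ IsLocalRing.maximalIdeal R)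
      (A ⧸ (IsLocalRing.maximalIdeal R • ⊤ : Submodule R A)) := by
    rintro n ⟨T', rfl, h1, h2, h3⟩
    exact card_eq_finrank_of_irredundant h1 h2 h3
  show sInf S = _
  apply le_antisymm
  · exact (hall _ hmem) ▸ Nat.sInf_le hmem
  · exact le_csInf ⟨_, hmem⟩ fun n hn => (hall n hn).ge
end
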